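/- arXiv:1603.07206 — 3 statements merged into one kernel-verified Lean document; each statement's English description precedes it below -/
import Mathlib

section
/- Let G be a group and a ∈ G an element of infinite order. If the commensurator Comm_G(⟨a⟩) is virtually cyclic (contains ⟨a⟩ with finite index), then there exists a nonzero integer k such that the normalizer N_G(⟨a^k⟩) equals Comm_G(⟨a⟩). -/
open Pointwise


/-- If `a` has infinite order and `⟨a⟩` has finite index in the commensurator of `⟨a⟩`,
then there is a nonzero integer `k` with `N_G(⟨a^k⟩) = Comm_G(⟨a⟩)`. -/
theorem stmt4 {G : Type*} [Group G] (a : G) (ha : ¬ IsOfFinOrder a)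
    (hfin : (Subgroup.zpowers a).relIndex
      (Subgroup.Commensurable.commensurator (Subgroup.zpowers a)) ≠ 0) :
    ∃ k : ℤ, k ≠ 0 ∧
      Subgroup.normalizer ((Subgroup.zpowers (a ^ k) : Subgroup G) : Set G) =
        Subgroup.Commensurable.commensurator (Subgroup.zpowers a) := by
  set A := Subgroup.zpowers a with hA
  set C := Subgroup.Commensurable.commensurator A with hC
  -- A ≤ C
  have hAC : A ≤ C := by
    rw [Subgroup.zpowers_le]
    rw [hC, Subgroup.Commensurable.commensurator_mem_iff]
    have : ConjAct.toConjAct a • A = A := by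
      ext x
      rw [Subgroup.mem_pointwise_smul_iff_inv_smul_mem]
      rw [ConjAct.smul_def]
      simp only [map_inv, ConjAct.ofConjAct_toConjAct]
      constructor
      · rintro ⟨m, hm⟩
        simp only at hm
        refine ⟨m, ?_⟩
        show a ^ m = x
        have hx : x = a * a ^ m * a⁻¹ := by rw [hm]; group
        rw [hx]; group
      · rintro ⟨m, hm⟩
        simp only at hm
        refine ⟨m, ?_⟩
        show a ^ m = a⁻¹ * x * a⁻¹⁻¹
        rw [← hm]; group
    rw [this]
  -- the subgroup of C
  have hAidx : ((A.subgroupOf C)).index ≠ 0 := hfin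
  haveI : (A.subgroupOf C).FiniteIndex := ⟨hAidx⟩
  set N : Subgroup C := (A.subgroupOf C).normalCore with hN
  haveI : N.FiniteIndex := Subgroup.finiteIndex_normalCore _
  set K : Subgroup G := N.map C.subtype with hK
  have hKC : K ≤ C := Subgroup.map_subtype_le N
  have hKA : K ≤ A := by
    rintro x ⟨y, hy, rfl⟩
    exact Subgroup.mem_subgroupOf.mp ((A.subgroupOf C).normalCore_le hy)
  -- K has finite relindex in C
  have hKrelC : K.relIndex C ≠ 0 := by
    have : K.subgroupOf C = N := by
      rw [hK, Subgroup.subgroupOf, Subgroup.comap_map_eq_self_of_injective C.subtype_injective]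
    rw [Subgroup.relIndex, this]
    exact Subgroup.FiniteIndex.index_ne_zero
  have hKrelA : K.relIndex A ≠ 0 := by
    intro h0
    rw [← Subgroup.relIndex_mul_relIndex K A C hKA hAC, h0, zero_mul] at hKrelC
    exact hKrelC rfl
  -- K = zpowers (a ^ k)
  set S : AddSubgroup ℤ :=
    { carrier := {m : ℤ | a ^ m ∈ K}
      zero_mem' := by simp [Subgroup.one_mem]
      add_mem' := fun {x y} hx hy => by
        simp only [Set.mem_setOf_eq, zpow_add] at *
        exact K.mul_mem hx hy
      neg_mem' := fun {x} hx => by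
        simp only [Set.mem_setOf_eq, zpow_neg] at *
        exact K.inv_mem hx } with hS
  obtain ⟨k, hk⟩ := Int.subgroup_cyclic S
  have hkS : k ∈ S := by rw [hk]; exact AddSubgroup.subset_closure rfl
  have hKeq : K = Subgroup.zpowers (a ^ k) := by
    apply le_antisymm
    · intro x hx
      obtain ⟨m, hm⟩ := Subgroup.mem_zpowers_iff.mp (hKA hx)
      have hmS : m ∈ S := by
        show a ^ m ∈ K
        rw [hm]; exact hx
      rw [hk, ← AddSubgroup.zmultiples_eq_closure, AddSubgroup.mem_zmultiples_iff] at hmS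
      obtain ⟨t, ht⟩ := hmS
      refine Subgroup.mem_zpowers_iff.mpr ⟨t, ?_⟩
      rw [← hm, ← ht, smul_eq_mul, ← zpow_mul, mul_comm]
    · rw [Subgroup.zpowers_le]
      exact hkS
  have hk0 : k ≠ 0 := by
    intro h0
    rw [h0] at hKeq
    simp only [zpow_zero, Subgroup.zpowers_one_eq_bot] at hKeq
    rw [hKeq, Subgroup.relIndex_bot_left] at hKrelA
    have : (A : Set G).Infinite := infinite_zpowers.2 ha
    haveI : Infinite A := this.to_subtype
    exact hKrelA (Nat.card_eq_zero_of_infinite)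
  refine ⟨k, hk0, ?_⟩
  rw [← hKeq]
  apply le_antisymm
  · -- normalizer K ≤ C
    intro g hg
    have hsmul : ConjAct.toConjAct g • K = K := by
      ext x
      rw [Subgroup.mem_pointwise_smul_iff_inv_smul_mem, ConjAct.smul_def]
      simp only [map_inv, ConjAct.ofConjAct_toConjAct]
      rw [Subgroup.mem_normalizer_iff] at hg
      constructor
      · intro hx
        have := (hg _).mp hx
        simpa [mul_assoc] using this
      · intro hx
        refine (hg (g⁻¹ * x * g⁻¹⁻¹)).mpr ?_
        simpa [mul_assoc] using hx
    have hcomm : Subgroup.Commensurable K A :=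
      ⟨hKrelA, by
        have : A.subgroupOf K = ⊤ := by
          rw [Subgroup.subgroupOf_eq_top]; exact hKA
        rw [Subgroup.relIndex, this, Subgroup.index_top]; exact one_ne_zero⟩
    have : Subgroup.Commensurable.commensurator K = C := Subgroup.Commensurable.eq hcomm
    rw [← this, Subgroup.Commensurable.commensurator_mem_iff, hsmul]
  · -- C ≤ normalizer K
    intro g hg
    rw [Subgroup.mem_normalizer_iff]
    intro x
    constructor
    · rintro ⟨y, hy, rfl⟩
      have : (⟨g, hg⟩ : C) * y * (⟨g, hg⟩ : C)⁻¹ ∈ N :=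
        Subgroup.normalCore_normal _ |>.conj_mem y hy _
      exact ⟨_, this, by simp⟩
    · intro hx
      -- x = g⁻¹ * (g x g⁻¹) * g; need g x g⁻¹ ∈ K → x ∈ K
      obtain ⟨y, hy, hyx⟩ := hx
      have : (⟨g, hg⟩ : C)⁻¹ * y * (⟨g, hg⟩ : C) ∈ N := by
        have := Subgroup.normalCore_normal (A.subgroupOf C) |>.conj_mem y hy (⟨g, hg⟩ : C)⁻¹
        simpa using this
      refine ⟨_, this, ?_⟩
      have hyx' : (y : G) = g * x * g⁻¹ := hyx
      show g⁻¹ * (y : G) * g = x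
      rw [hyx']; group
end

section
/- Let G be a group, a ∈ G, with Cen_G(⟨a⟩) infinite cyclic of index exactly 2 in Comm_G(⟨a⟩). Then N_G(⟨a⟩) = Comm_G(⟨a⟩), and Comm_G(⟨a⟩) is isomorphic to ℤ₂ * ℤ₂. -/
private def stmt11.toZ : ZMod 0 → ℤ := fun i => i

private def stmt11.dihMap {Q : Type*} [Group Q] (c ψ : Q) : DihedralGroup 0 → Q
  | .r i => c ^ stmt11.toZ i
  | .sr i => ψ * c ^ stmt11.toZ i

private theorem stmt11.dihMap_mul {Q : Type*} [Group Q] {c ψ : Q}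
    (h1 : ψ * c * ψ⁻¹ = c⁻¹) (h2 : ψ * ψ = 1) (x y : DihedralGroup 0) :
    stmt11.dihMap c ψ (x * y) = stmt11.dihMap c ψ x * stmt11.dihMap c ψ y := by
  have hswap : ∀ n : ℤ, ψ * c ^ n = c ^ (-n) * ψ := by
    intro n
    have h : ψ * c ^ n * ψ⁻¹ = c ^ (-n) := by
      rw [← conj_zpow, h1, inv_zpow, zpow_neg]
    have := congrArg (· * ψ) h
    simpa [mul_assoc] using this
  have hswap' : ∀ n : ℤ, c ^ n * ψ = ψ * c ^ (-n) := by
    intro n; rw [hswap (-n), neg_neg]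
  have hadd : ∀ i j : ZMod 0, stmt11.toZ (i + j) = stmt11.toZ i + stmt11.toZ j := fun _ _ => rfl
  have hsub : ∀ i j : ZMod 0, stmt11.toZ (i - j) = stmt11.toZ i - stmt11.toZ j := fun _ _ => rfl
  cases x with
  | r i => cases y with
    | r j => show c ^ stmt11.toZ (i+j) = c ^ stmt11.toZ i * c ^ stmt11.toZ j; rw [hadd, zpow_add]
    | sr j =>
        show ψ * c ^ stmt11.toZ (j - i) = c ^ stmt11.toZ i * (ψ * c ^ stmt11.toZ j)
        rw [hsub, ← mul_assoc, hswap' (stmt11.toZ i), mul_assoc, ← zpow_add]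
        congr 1; ring
  | sr i => cases y with
    | r j =>
        show ψ * c ^ stmt11.toZ (i + j) = ψ * c ^ stmt11.toZ i * c ^ stmt11.toZ j
        rw [hadd, zpow_add, mul_assoc]
    | sr j =>
        show c ^ stmt11.toZ (j - i) = ψ * c ^ stmt11.toZ i * (ψ * c ^ stmt11.toZ j)
        rw [hsub, mul_assoc, ← mul_assoc (c ^ stmt11.toZ i), hswap' (stmt11.toZ i),
          ← mul_assoc, ← mul_assoc, h2, one_mul, ← zpow_add]
        congr 1; ring

open Pointwise in
/-- If `Cen_G(⟨a⟩)` is infinite cyclic of index exactly 2 in `Comm_G(⟨a⟩)`, then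
`N_G(⟨a⟩) = Comm_G(⟨a⟩)` and `Comm_G(⟨a⟩)` is isomorphic to `ℤ₂ * ℤ₂`
(the infinite dihedral group `DihedralGroup 0`). -/
theorem stmt11 {G : Type*} [Group G] (a : G)
    (hcyc : ∃ c : G, Subgroup.centralizer (Subgroup.zpowers a : Subgroup G) =
      Subgroup.zpowers c ∧ ¬ IsOfFinOrder c)
    (hidx : (Subgroup.centralizer (Subgroup.zpowers a : Subgroup G)).relIndex
      (Subgroup.Commensurable.commensurator (Subgroup.zpowers a)) = 2) :
    Subgroup.normalizer (Subgroup.zpowers a : Set G) = Subgroup.Commensurable.commensurator (Subgroup.zpowers a) ∧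
    Nonempty (↥(Subgroup.Commensurable.commensurator (Subgroup.zpowers a)) ≃* DihedralGroup 0) := by
  classical
  obtain ⟨c, hc, hcinf⟩ := hcyc
  set A : Subgroup G := Subgroup.zpowers a with hA
  set Cen : Subgroup G := Subgroup.centralizer (A : Set G) with hCen
  set Comm : Subgroup G := Subgroup.Commensurable.commensurator A with hComm
  -- a is in the centralizer
  have ha_cen : a ∈ Cen := by
    rw [hCen, Subgroup.mem_centralizer_iff]
    rintro h ⟨n, rfl⟩
    exact ((Commute.refl a).zpow_left n).eq
  obtain ⟨k, hk⟩ : ∃ k : ℤ, c ^ k = a := by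
    have := ha_cen
    rw [hc] at this
    exact this
  have hc_cen : c ∈ Cen := by rw [hc]; exact Subgroup.mem_zpowers c
  -- centralizer ≤ normalizer
  have cen_le_norm : Cen ≤ Subgroup.normalizer (A : Set G) := by
    intro g hg
    rw [Subgroup.mem_normalizer_iff]
    intro h
    constructor
    · intro hh
      have := Subgroup.mem_centralizer_iff.mp hg h hh
      rw [show g * h * g⁻¹ = h from by rw [← this]; group]
      exact hh
    · intro hh
      have := Subgroup.mem_centralizer_iff.mp hg _ hh
      have : h = g * h * g⁻¹ := by
        have h2 : (g * h * g⁻¹) * g = g * (g * h * g⁻¹) := this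
        have h3 : g * h = g * (g * h * g⁻¹) := by
          calc g * h = ((g * h * g⁻¹) * g) := by group
          _ = g * (g * h * g⁻¹) := h2
        exact mul_left_cancel h3
      rw [this]; exact hh
  -- normalizer ≤ commensurator
  have norm_le_comm : Subgroup.normalizer (A : Set G) ≤ Comm := by
    intro g hg
    have hsmul : ConjAct.toConjAct g • A = A := by
      ext x
      rw [Subgroup.mem_pointwise_smul_iff_inv_smul_mem]
      have : (ConjAct.toConjAct g)⁻¹ • x = g⁻¹ * x * g := by
        rw [← ConjAct.toConjAct_inv, ConjAct.toConjAct_smul]; group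
      rw [this]
      exact (Subgroup.mem_normalizer_iff''.mp hg x).symm
    rw [hComm]
    show Subgroup.Commensurable (ConjAct.toConjAct g • A) A
    rw [hsmul]
  have hle : Cen ≤ Comm := le_trans cen_le_norm norm_le_comm
  -- set up inside Comm
  set K : Subgroup Comm := Cen.subgroupOf Comm with hKdef
  have hK : K.index = 2 := hidx
  set cQ : Comm := ⟨c, hle hc_cen⟩ with hcQ
  have hK_eq : ∀ x : Comm, x ∈ K ↔ ∃ n : ℤ, cQ ^ n = x := by
    intro x
    rw [hKdef, Subgroup.mem_subgroupOf, hCen]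
    constructor
    · intro hx
      rw [← hCen, hc] at hx
      obtain ⟨n, hn⟩ := hx
      exact ⟨n, by ext; simpa using hn⟩
    · rintro ⟨n, rfl⟩
      rw [← hCen]
      have : ((cQ ^ n : Comm) : G) = c ^ n := by simp [hcQ]
      rw [this]
      exact Subgroup.zpow_mem _ hc_cen n
  have hcQinf : ¬ IsOfFinOrder cQ := by
    intro h
    have : Comm.subtype cQ = c := rfl
    exact hcinf (this ▸ Comm.subtype.isOfFinOrder h)
  have zinj : Function.Injective fun n : ℤ => cQ ^ n :=
    injective_zpow_iff_not_isOfFinOrder.mpr hcQinf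
  -- commuting with c puts you in K
  have commutes_imp_mem : ∀ x : Comm, ((x : G) * c = c * (x : G)) → x ∈ K := by
    intro x hx
    rw [hKdef, Subgroup.mem_subgroupOf, hCen, Subgroup.mem_centralizer_iff]
    rintro h ⟨m, rfl⟩
    have hcom : Commute (x : G) c := hx
    have : Commute (x : G) (a ^ m) := by
      rw [← hk, ← zpow_mul]
      exact (Commute.zpow_right hcom (k * m))
    exact this.symm.eq
  -- K is normal (index 2)
  have hKnormal : K.Normal := by
    constructor
    intro n hn g
    by_cases hg : g ∈ K
    · exact K.mul_mem (K.mul_mem hg hn) (K.inv_mem hg)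
    · have h1 : g * n ∉ K := by
        intro h
        rw [Subgroup.mul_mem_iff_of_index_two hK] at h
        exact hg (h.mpr hn)
      have h2 : g * n * g⁻¹ ∈ K := by
        rw [Subgroup.mul_mem_iff_of_index_two hK]
        simp only [Subgroup.inv_mem_iff]
        exact ⟨fun h => absurd h h1, fun h => absurd h hg⟩
      exact h2
  -- conjugation by elements outside K inverts cQ
  have conj_key : ∀ x : Comm, x ∉ K → x * cQ * x⁻¹ = cQ⁻¹ := by
    intro x hx
    have n1 : x * cQ * x⁻¹ ∈ K := hKnormal.conj_mem cQ ((hK_eq cQ).mpr ⟨1, zpow_one cQ⟩) x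
    have n2 : x⁻¹ * cQ * x⁻¹⁻¹ ∈ K :=
      hKnormal.conj_mem cQ ((hK_eq cQ).mpr ⟨1, zpow_one cQ⟩) x⁻¹
    obtain ⟨s, hs⟩ := (hK_eq _).mp n1
    obtain ⟨t, ht⟩ := (hK_eq _).mp n2
    have key : cQ ^ (t * s) = cQ ^ (1 : ℤ) := by
      rw [zpow_one, zpow_mul, ht, conj_zpow, hs]
      group
    have hts : t * s = 1 := zinj key
    rcases Int.eq_one_or_neg_one_of_mul_eq_one' hts with ⟨_, hs1⟩ | ⟨_, hs1⟩
    · exfalso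
      apply hx
      apply commutes_imp_mem
      have hxc : x * cQ * x⁻¹ = cQ := by rw [← hs, hs1, zpow_one]
      have hxc2 : x * cQ = cQ * x := by
        have := congrArg (· * x) hxc
        simpa [mul_assoc] using this
      have := congrArg (Subtype.val) hxc2
      simpa using this
    · rw [← hs, hs1, zpow_neg_one]
  -- pick ψ outside K
  have hKne : K ≠ ⊤ := by
    intro h
    rw [h, Subgroup.index_top] at hK
    exact absurd hK (by norm_num)
  obtain ⟨ψ, hψ⟩ : ∃ x : Comm, x ∉ K := by
    by_contra h
    push_neg at h
    exact hKne (Subgroup.eq_top_iff' K |>.mpr h)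
  have hψc : ψ * cQ * ψ⁻¹ = cQ⁻¹ := conj_key ψ hψ
  have hψ2 : ψ * ψ = 1 := by
    have hm : ψ * ψ ∈ K := Subgroup.mul_self_mem_of_index_two hK ψ
    obtain ⟨j, hj⟩ := (hK_eq _).mp hm
    have hconj : ψ * (ψ * ψ) * ψ⁻¹ = ψ * ψ := by group
    have h2 : cQ ^ (-j) = cQ ^ j := by
      calc cQ ^ (-j) = (cQ⁻¹) ^ j := by rw [zpow_neg, inv_zpow]
      _ = (ψ * cQ * ψ⁻¹) ^ j := by rw [hψc]
      _ = ψ * cQ ^ j * ψ⁻¹ := by rw [conj_zpow]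
      _ = ψ * (ψ * ψ) * ψ⁻¹ := by rw [hj]
      _ = ψ * ψ := hconj
      _ = cQ ^ j := hj.symm
    have hj0 : -j = j := zinj h2
    have : j = 0 := by omega
    rw [← hj, this, zpow_zero]
  -- Part 1 : normalizer = commensurator
  have part1 : Subgroup.normalizer (A : Set G) = Comm := by
    refine le_antisymm norm_le_comm ?_
    intro g hg
    set gQ : Comm := ⟨g, hg⟩ with hgQ
    by_cases hgK : gQ ∈ K
    · apply cen_le_norm
      rw [hKdef, Subgroup.mem_subgroupOf] at hgK
      exact hgK
    · have h1 : gQ * cQ * gQ⁻¹ = cQ⁻¹ := conj_key gQ hgK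
      have h2 : g * c * g⁻¹ = c⁻¹ := by
        have := congrArg (Subtype.val) h1
        simpa using this
      have haconj : g * a * g⁻¹ = a⁻¹ := by
        calc g * a * g⁻¹ = g * c ^ k * g⁻¹ := by rw [hk]
        _ = (g * c * g⁻¹) ^ k := by rw [conj_zpow]
        _ = (c⁻¹) ^ k := by rw [h2]
        _ = (c ^ k)⁻¹ := by rw [inv_zpow]
        _ = a⁻¹ := by rw [hk]
      have haconj' : g⁻¹ * a * g = a⁻¹ := by
        have h3 : a = g⁻¹ * a⁻¹ * g := by rw [← haconj]; group
        calc g⁻¹ * a * g = (g⁻¹ * a⁻¹ * g)⁻¹ := by group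
        _ = a⁻¹ := by rw [← h3]
      rw [Subgroup.mem_normalizer_iff]
      rintro h
      constructor
      · rintro ⟨m, rfl⟩
        refine ⟨-m, ?_⟩
        calc a ^ (-m) = (a⁻¹) ^ m := by rw [zpow_neg, inv_zpow]
        _ = (g * a * g⁻¹) ^ m := by rw [haconj]
        _ = g * a ^ m * g⁻¹ := by rw [conj_zpow]
      · rintro ⟨m, hm⟩
        refine ⟨-m, ?_⟩
        have : h = g⁻¹ * (g * h * g⁻¹) * g := by group
        rw [this, ← hm]
        calc a ^ (-m) = (a⁻¹) ^ m := by rw [zpow_neg, inv_zpow]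
        _ = (g⁻¹ * a * g) ^ m := by rw [haconj']
        _ = g⁻¹ * a ^ m * g := by
              rw [show g⁻¹ * a * g = g⁻¹ * a * g⁻¹⁻¹ from by rw [inv_inv], conj_zpow, inv_inv]
  -- Part 2 : the isomorphism
  have part2 : Nonempty (Comm ≃* DihedralGroup 0) := by
    have hmul := stmt11.dihMap_mul hψc hψ2
    let f : DihedralGroup 0 →* Comm := MonoidHom.mk' (stmt11.dihMap cQ ψ) hmul
    have hinj : Function.Injective f := by
      rintro (i | i) (j | j) hfeq
      · have : cQ ^ stmt11.toZ i = cQ ^ stmt11.toZ j := hfeq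
        have := zinj this
        exact congrArg DihedralGroup.r this
      · exfalso
        apply hψ
        have : cQ ^ stmt11.toZ i = ψ * cQ ^ stmt11.toZ j := hfeq
        have hψeq : ψ = cQ ^ stmt11.toZ i * (cQ ^ stmt11.toZ j)⁻¹ := by
          rw [this]; group
        rw [hψeq, ← zpow_neg, ← zpow_add]
        exact (hK_eq _).mpr ⟨_, rfl⟩
      · exfalso
        apply hψ
        have : ψ * cQ ^ stmt11.toZ i = cQ ^ stmt11.toZ j := hfeq
        have hψeq : ψ = cQ ^ stmt11.toZ j * (cQ ^ stmt11.toZ i)⁻¹ := by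
          rw [← this]; group
        rw [hψeq, ← zpow_neg, ← zpow_add]
        exact (hK_eq _).mpr ⟨_, rfl⟩
      · have : ψ * cQ ^ stmt11.toZ i = ψ * cQ ^ stmt11.toZ j := hfeq
        have := zinj (mul_left_cancel this)
        exact congrArg DihedralGroup.sr this
    have hsurj : Function.Surjective f := by
      intro x
      by_cases hxK : x ∈ K
      · obtain ⟨n, hn⟩ := (hK_eq _).mp hxK
        exact ⟨DihedralGroup.r n, hn⟩
      · have hψx : ψ⁻¹ * x ∈ K := by
          rw [Subgroup.mul_mem_iff_of_index_two hK]
          simp only [Subgroup.inv_mem_iff]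
          exact ⟨fun h => absurd h hψ, fun h => absurd h hxK⟩
        obtain ⟨n, hn⟩ := (hK_eq _).mp hψx
        refine ⟨DihedralGroup.sr n, ?_⟩
        show ψ * cQ ^ stmt11.toZ n = x
        rw [show cQ ^ stmt11.toZ n = ψ⁻¹ * x from hn]
        group
    exact ⟨(MulEquiv.ofBijective f ⟨hinj, hsurj⟩).symm⟩
  exact ⟨part1, part2⟩
end

section
/- In GL(2, ℤ), the centralizer of the cyclic subgroup generated by A = [[0,1],[1,1]] equals the subgroup generated by A and -I. -/
private lemma descent_ineq_same (a b : ℤ) (ha : a ≠ 0) (hpos : 0 < a * b)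
    (heq : a*a + a*b - b*b = 1 ∨ a*a + a*b - b*b = -1) :
    (b - a).natAbs < b.natAbs := by
  have h : (0 < a ∧ 0 < b ∧ a < 2*b) ∨ (a < 0 ∧ b < 0 ∧ 2*b < a) := by
    rcases lt_trichotomy a 0 with h1 | h1 | h1
    · have hb' : b < 0 := by nlinarith
      refine Or.inr ⟨h1, hb', ?_⟩
      by_contra hc
      push_neg at hc
      rcases heq with h | h <;> nlinarith
    · exact absurd h1 ha
    · have hb' : 0 < b := by nlinarith
      refine Or.inl ⟨h1, hb', ?_⟩
      by_contra hc
      push_neg at hc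
      rcases heq with h | h <;> nlinarith
  omega

private lemma descent_ineq_diff (a b : ℤ) (ha : a ≠ 0) (hneg : a * b < 0)
    (heq : a*a + a*b - b*b = 1 ∨ a*a + a*b - b*b = -1) :
    (a + b).natAbs < a.natAbs := by
  have h : (0 < a ∧ b < 0 ∧ -2*a < b) ∨ (a < 0 ∧ 0 < b ∧ b < -2*a) := by
    rcases lt_trichotomy a 0 with h1 | h1 | h1
    · have hb' : 0 < b := by nlinarith
      refine Or.inr ⟨h1, hb', ?_⟩
      by_contra hc
      push_neg at hc
      rcases heq with h | h <;> nlinarith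
    · exact absurd h1 ha
    · have hb' : b < 0 := by nlinarith
      refine Or.inl ⟨h1, hb', ?_⟩
      by_contra hc
      push_neg at hc
      rcases heq with h | h <;> nlinarith
  omega

private lemma descent_main (A : GL (Fin 2) ℤ)
    (hA : (A : Matrix (Fin 2) (Fin 2) ℤ) = !![0, 1; 1, 1]) :
    ∀ n : ℕ, ∀ a b : ℤ, a.natAbs + b.natAbs ≤ n →
      (a*a + a*b - b*b = 1 ∨ a*a + a*b - b*b = -1) →
      ∀ B : GL (Fin 2) ℤ, (B : Matrix (Fin 2) (Fin 2) ℤ) = !![a, b; b, a+b] →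
      B ∈ Subgroup.closure {A, (-1 : GL (Fin 2) ℤ)} := by
  have hAmem : A ∈ Subgroup.closure {A, (-1 : GL (Fin 2) ℤ)} :=
    Subgroup.subset_closure (Set.mem_insert _ _)
  have hNmem : (-1 : GL (Fin 2) ℤ) ∈ Subgroup.closure {A, (-1 : GL (Fin 2) ℤ)} :=
    Subgroup.subset_closure (Set.mem_insert_of_mem _ rfl)
  have hAinv : ((A⁻¹ : GL (Fin 2) ℤ) : Matrix (Fin 2) (Fin 2) ℤ) = !![-1, 1; 1, 0] := by
    rw [Matrix.coe_units_inv, hA]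
    apply Matrix.inv_eq_right_inv
    simp [Matrix.mul_fin_two, Matrix.one_fin_two]
  intro n
  induction n with
  | zero =>
    intro a b hn heq B hB
    have ha : a = 0 := by omega
    have hb : b = 0 := by omega
    subst ha hb
    simp at heq
  | succ n ih =>
    intro a b hn heq B hB
    by_cases hb : b = 0
    · -- B = ±1
      subst hb
      have ha2 : a * a = 1 := by
        rcases heq with h | h
        · linarith
        · nlinarith [sq_nonneg a]
      rcases Int.isUnit_iff.mp (IsUnit.of_mul_eq_one (a := a) a ha2) with ha | ha
      · have : B = 1 := by
          apply Units.ext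
          rw [hB, ha]
          rw [← Matrix.ext_iff]; simp [Fin.forall_fin_two, Matrix.one_apply]
        rw [this]; exact Subgroup.one_mem _
      · have : B = -1 := by
          apply Units.ext
          rw [hB, ha, Units.val_neg, Units.val_one]
          rw [← Matrix.ext_iff]; simp [Fin.forall_fin_two, Matrix.one_apply]
        rw [this]; exact hNmem
    · by_cases ha : a = 0
      · -- B = ±A
        subst ha
        have hb2 : b * b = 1 := by
          rcases heq with h | h
          · nlinarith [sq_nonneg b]
          · linarith
        rcases Int.isUnit_iff.mp (IsUnit.of_mul_eq_one (a := b) b hb2) with hb1 | hb1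
        · have : B = A := by
            apply Units.ext
            rw [hB, hb1, hA]
            norm_num
          rw [this]; exact hAmem
        · have : B = -A := by
            apply Units.ext
            rw [hB, hb1, Units.val_neg, hA]
            norm_num
          rw [this]
          have : (-A : GL (Fin 2) ℤ) = (-1) * A := by rw [neg_one_mul]
          rw [this]
          exact Subgroup.mul_mem _ hNmem hAmem
      · -- descent
        rcases lt_or_gt_of_ne (fun h => by rcases mul_eq_zero.mp h with h | h <;> simp_all :
            a * b ≠ 0) with hneg | hpos
        · -- use B * A : pair (b, a + b)
          have hlt := descent_ineq_diff a b ha hneg heq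
          have heq' : b*b + b*(a+b) - (a+b)*(a+b) = 1 ∨ b*b + b*(a+b) - (a+b)*(a+b) = -1 := by
            rcases heq with h | h
            · right; linear_combination -h
            · left; linear_combination -h
          have hBA : ((B * A : GL (Fin 2) ℤ) : Matrix (Fin 2) (Fin 2) ℤ)
              = !![b, a+b; a+b, b+(a+b)] := by
            rw [Units.val_mul, hB, hA, Matrix.mul_fin_two]
            rw [← Matrix.ext_iff]
            simp only [Fin.forall_fin_two, Matrix.cons_val', Matrix.cons_val_zero,
              Matrix.cons_val_one, Matrix.head_cons, Matrix.empty_val',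
              Matrix.cons_val_fin_one, Matrix.head_fin_const]
            refine ⟨⟨by ring, by ring⟩, by ring, by ring⟩
          have hmem := ih b (a+b) (by omega) heq' (B * A) hBA
          have : B = (B * A) * A⁻¹ := by group
          rw [this]
          exact Subgroup.mul_mem _ hmem (Subgroup.inv_mem _ hAmem)
        · -- use B * A⁻¹ : pair (b - a, a)
          have hlt := descent_ineq_same a b ha hpos heq
          have heq' : (b-a)*(b-a) + (b-a)*a - a*a = 1 ∨ (b-a)*(b-a) + (b-a)*a - a*a = -1 := by
            rcases heq with h | h
            · right; linear_combination -h
            · left; linear_combination -h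
          have hBA : ((B * A⁻¹ : GL (Fin 2) ℤ) : Matrix (Fin 2) (Fin 2) ℤ)
              = !![b-a, a; a, (b-a)+a] := by
            rw [Units.val_mul, hB, hAinv, Matrix.mul_fin_two]
            rw [← Matrix.ext_iff]
            simp only [Fin.forall_fin_two, Matrix.cons_val', Matrix.cons_val_zero,
              Matrix.cons_val_one, Matrix.head_cons, Matrix.empty_val',
              Matrix.cons_val_fin_one, Matrix.head_fin_const]
            refine ⟨⟨by ring, by ring⟩, by ring, by ring⟩
          have hmem := ih (b-a) a (by omega) heq' (B * A⁻¹) hBA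
          have : B = (B * A⁻¹) * A := by group
          rw [this]
          exact Subgroup.mul_mem _ hmem hAmem

/-- In `GL(2, ℤ)`, the centralizer of the cyclic subgroup generated by
`A = [[0,1],[1,1]]` equals the subgroup generated by `A` and `-I`. -/
theorem stmt12 (A : GL (Fin 2) ℤ) (hA : (A : Matrix (Fin 2) (Fin 2) ℤ) = !![0, 1; 1, 1]) :
    Subgroup.centralizer (Subgroup.zpowers A : Subgroup (GL (Fin 2) ℤ)) =
      Subgroup.closure {A, (-1 : GL (Fin 2) ℤ)} := by
  apply le_antisymm
  · -- hard direction
    intro B hBmem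
    have hcomm : (A : GL (Fin 2) ℤ) * B = B * A :=
      Subgroup.mem_centralizer_iff.mp hBmem A (Subgroup.mem_zpowers A)
    have hcommM : (A : Matrix (Fin 2) (Fin 2) ℤ) * (B : Matrix (Fin 2) (Fin 2) ℤ)
        = (B : Matrix (Fin 2) (Fin 2) ℤ) * (A : Matrix (Fin 2) (Fin 2) ℤ) := by
      rw [← Units.val_mul, ← Units.val_mul, hcomm]
    set M := (B : Matrix (Fin 2) (Fin 2) ℤ) with hM
    rw [hA] at hcommM
    set a := M 0 0 with ha
    set b := M 0 1 with hb2
    have hform : M = !![a, b; b, a + b] := by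
      rw [Matrix.eta_fin_two M] at hcommM
      simp only [Matrix.mul_fin_two] at hcommM
      rw [← Matrix.ext_iff] at hcommM
      simp only [Fin.forall_fin_two] at hcommM
      norm_num at hcommM
      rw [Matrix.eta_fin_two M, ← Matrix.ext_iff]
      simp only [Fin.forall_fin_two]
      norm_num
      omega
    have hdet : M.det = 1 ∨ M.det = -1 := by
      apply Int.isUnit_iff.mp
      exact IsUnit.of_mul_eq_one _ (by
        rw [← Matrix.det_mul, ← Units.val_mul, mul_inv_cancel, Units.val_one, Matrix.det_one] :
        M.det * ((B⁻¹ : GL (Fin 2) ℤ) : Matrix (Fin 2) (Fin 2) ℤ).det = 1)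
    have heq : a*a + a*b - b*b = 1 ∨ a*a + a*b - b*b = -1 := by
      rw [hform, Matrix.det_fin_two_of] at hdet
      rcases hdet with h | h
      · left; linear_combination h
      · right; linear_combination h
    exact descent_main A hA (a.natAbs + b.natAbs) a b le_rfl heq B hform
  · rw [Subgroup.closure_le]
    rintro x (rfl | rfl)
    · rw [SetLike.mem_coe, Subgroup.mem_centralizer_iff]
      rintro g ⟨n, rfl⟩
      exact (Commute.zpow_left (Commute.refl x) n).eq
    · rw [SetLike.mem_coe, Subgroup.mem_centralizer_iff]
      intro g _
      simp [mul_neg, neg_mul]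
end
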